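/- Let Q = {β_1, β_2, β_3, β_4} be a coplanar quadruple of positive roots in a simply laced root system of type D_n (n even), E_7, or E_8, with heights h_1 ≤ h_2 ≤ h_3 ≤ h_4. Then h_1 + h_2 + h_3 ≠ h_4 and h_2 + h_3 ≠ h_1 + h_4. -/
import Mathlib

open scoped RealInnerProductSpace

lemma aux_ht_ne {V : Type*} [NormedAddCommGroup V] [InnerProductSpace ℝ V]
    {Φ : Set V} (hlen : ∀ α ∈ Φ, ⟪α, α⟫ = (2 : ℝ))
    {ι : Type*} [Fintype ι] {Δ : ι → V}
    (hbase : ∀ γ ∈ Φ, ∃ c : ι → ℤ, ((∀ i, 0 ≤ c i) ∨ (∀ i, c i ≤ 0)) ∧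
      γ = ∑ i, (c i : ℝ) • Δ i)
    (ht : V →ₗ[ℝ] ℝ) (hht : ∀ i, ht (Δ i) = 1)
    {ρ : V} (hρ : ρ ∈ Φ) : ht ρ ≠ 0 := by
  obtain ⟨c, hc, hrep⟩ := hbase ρ hρ
  intro h0
  have hhtρ : ht ρ = ∑ i, (c i : ℝ) := by
    rw [hrep, map_sum]; simp [hht]
  have hz : ∀ i, (c i : ℝ) = 0 := by
    rcases hc with hc | hc
    · intro i
      have := (Finset.sum_eq_zero_iff_of_nonneg
        (fun i _ => by exact_mod_cast hc i)).mp (hhtρ ▸ h0) i (Finset.mem_univ i)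
      exact this
    · intro i
      have hs : ∑ j, (-(c j : ℝ)) = 0 := by
        have he : ∑ j, (-(c j : ℝ)) = -∑ j, (c j : ℝ) := by simp
        rw [he, ← hhtρ, h0, neg_zero]
      have hle : ∀ j, (c j : ℝ) ≤ 0 := fun j => by exact_mod_cast hc j
      have := (Finset.sum_eq_zero_iff_of_nonneg
        (fun j _ => by linarith [hle j])).mp hs i (Finset.mem_univ i)
      linarith
  have hρ0 : ρ = 0 := by
    rw [hrep]; exact Finset.sum_eq_zero (fun i _ => by rw [hz i, zero_smul])
  have := hlen ρ hρ
  rw [hρ0, inner_zero_left] at this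
  norm_num at this

theorem stmt14 {V : Type*} [NormedAddCommGroup V] [InnerProductSpace ℝ V]
    (Φ : Set V) (hfin : Φ.Finite)
    (hlen : ∀ α ∈ Φ, ⟪α, α⟫ = (2 : ℝ))
    (hneg : ∀ α ∈ Φ, -α ∈ Φ)
    (hrefl : ∀ α ∈ Φ, ∀ β ∈ Φ, β - ⟪α, β⟫ • α ∈ Φ)
    (hcrys : ∀ α ∈ Φ, ∀ β ∈ Φ, ∃ m : ℤ, ⟪α, β⟫ = (m : ℝ))
    {ι : Type*} [Fintype ι] (Δ : ι → V) (hΔ : ∀ i, Δ i ∈ Φ)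
    (hind : LinearIndependent ℝ Δ)
    (hbase : ∀ γ ∈ Φ, ∃ c : ι → ℤ, ((∀ i, 0 ≤ c i) ∨ (∀ i, c i ≤ 0)) ∧
      γ = ∑ i, (c i : ℝ) • Δ i)
    (ht : V →ₗ[ℝ] ℝ) (hht : ∀ i, ht (Δ i) = 1)
    (β : Fin 4 → V) (hβΦ : ∀ m, β m ∈ Φ)
    (hpos : ∀ m, ∃ c : ι → ℤ, (∀ i, 0 ≤ c i) ∧ β m = ∑ i, (c i : ℝ) • Δ i)
    (horth : ∀ p q, p ≠ q → ⟪β p, β q⟫ = (0 : ℝ))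
    (hcop : ∃ γ ∈ Φ, β 0 + β 1 + β 2 + β 3 = (2 : ℝ) • γ)
    (hord : ht (β 0) ≤ ht (β 1) ∧ ht (β 1) ≤ ht (β 2) ∧ ht (β 2) ≤ ht (β 3)) :
    ht (β 0) + ht (β 1) + ht (β 2) ≠ ht (β 3) ∧
    ht (β 1) + ht (β 2) ≠ ht (β 0) + ht (β 3) := by
  obtain ⟨γ, hγΦ, heq⟩ := hcop
  -- inner products ⟪γ, β m⟫ = 1
  have hip : ∀ m : Fin 4, ⟪γ, β m⟫ = (1 : ℝ) := by
    intro m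
    have h2 : ⟪(2:ℝ) • γ, β m⟫ = 2 * ⟪γ, β m⟫ := real_inner_smul_left _ _ _
    have hsum : ⟪β 0 + β 1 + β 2 + β 3, β m⟫ = (2:ℝ) := by
      have hb : ∀ p, ⟪β p, β m⟫ = if p = m then (2:ℝ) else 0 := by
        intro p
        split
        · next h => rw [h]; exact hlen _ (hβΦ m)
        · next h => exact horth _ _ h
      rw [inner_add_left, inner_add_left, inner_add_left, hb, hb, hb, hb]
      fin_cases m <;> norm_num [Fin.ext_iff] <;> decide
    rw [← heq, hsum] at h2
    linarith
  -- γ - β m ∈ Φ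
  have hmem : ∀ m : Fin 4, γ - β m ∈ Φ := by
    intro m
    have := hrefl γ hγΦ (β m) (hβΦ m)
    rw [hip m, one_smul] at this
    have := hneg _ this
    simpa using this
  -- γ - β 0 - β 3 ∈ Φ
  have hmem2 : γ - β 0 - β 3 ∈ Φ := by
    have := hrefl (β 3) (hβΦ 3) (γ - β 0) (hmem 0)
    have hip2 : ⟪β 3, γ - β 0⟫ = (1:ℝ) := by
      rw [inner_sub_right, real_inner_comm, hip, horth 3 0 (by decide)]; ring
    rw [hip2, one_smul] at this
    exact this
  -- heights
  have hhtγ : 2 * ht γ = ht (β 0) + ht (β 1) + ht (β 2) + ht (β 3) := by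
    have := congrArg ht heq
    simp only [map_add, map_smul, smul_eq_mul] at this
    linarith
  constructor
  · intro h
    have h1 := aux_ht_ne hlen hbase ht hht (hmem 3)
    have : ht (γ - β 3) = 0 := by
      rw [map_sub]; linarith
    exact h1 this
  · intro h
    have h1 := aux_ht_ne hlen hbase ht hht hmem2
    have : ht (γ - β 0 - β 3) = 0 := by
      rw [map_sub, map_sub]; linarith
    exact h1 this
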